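/- Let ũ^{n+1}: Ω_h → ℝ³ vanish on ∂Ω_h and satisfy the homogeneous implicit equation ũ^{n+1}(x) = -(τ/2)∑_j (u^n_j(x-he^j)D_j ũ^{n+1}(x-he^j) + u^n_j(x+he^j)D_j ũ^{n+1}(x+he^j)) + τ∑_j D_j² ũ^{n+1}(x) on Ω_h∖∂Ω_h, where 𝒟·u^n = 0 on Ω_h∖∂Ω_h and u^n = 0 on ∂Ω_h. Then ‖ũ^{n+1}‖²_{Ω_h} + τ∑_{j=1}³ ‖D_j⁺ ũ^{n+1}‖²_{Ω_h} = 0, hence ũ^{n+1} ≡ 0. -/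

import Mathlib

open Finset Real

/-- Lattice points of the grid (indices; the physical point is `h • x`). -/
abbrev Pt := Fin 3 → ℤ

/-- Standard basis vector of the lattice. -/
def ee (i : Fin 3) : Pt := fun j => if j = i then 1 else 0

/-- Central difference `D_i φ(x) = (φ(x+he^i) - φ(x-he^i))/(2h)`. -/
noncomputable def Dc (h : ℝ) (i : Fin 3) (φ : Pt → ℝ) (x : Pt) : ℝ :=
  (φ (x + ee i) - φ (x - ee i)) / (2 * h)

/-- Forward difference `D_i⁺ φ(x) = (φ(x+he^i) - φ(x))/h`. -/
noncomputable def Dp (h : ℝ) (i : Fin 3) (φ : Pt → ℝ) (x : Pt) : ℝ :=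
  (φ (x + ee i) - φ x) / h

/-- Second difference `D_i² φ(x) = (φ(x+he^i)+φ(x-he^i)-2φ(x))/h²`. -/
noncomputable def D2 (h : ℝ) (i : Fin 3) (φ : Pt → ℝ) (x : Pt) : ℝ :=
  (φ (x + ee i) + φ (x - ee i) - 2 * φ x) / h ^ 2

/-- Central-difference divergence `𝒟·u`. -/
noncomputable def divc (h : ℝ) (u : Pt → Fin 3 → ℝ) (x : Pt) : ℝ :=
  ∑ i, Dc h i (fun y => u y i) x

open scoped Classical in
/-- Discrete boundary `∂Ω_h = {x ∈ Ω_h : {x ± he^i} ⊄ Ω_h}`. -/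
noncomputable def bdry (Ω : Finset Pt) : Finset Pt :=
  Ω.filter (fun x => ∃ i : Fin 3, x + ee i ∉ Ω ∨ x - ee i ∉ Ω)

/-- Parity class (one of the eight classes G¹,…,G⁸) of a grid point. -/
def parity (x : Pt) : Fin 3 → ZMod 2 := fun i => (x i : ZMod 2)

open scoped Classical in
/-- The interior sub-grid `Ω_h^∘`. -/
noncomputable def circInt (Ω : Finset Pt) : Finset Pt :=
  (Ω \ bdry Ω).filter
    (fun x => ∀ a : Fin 3 → ℤ, (∀ i, 0 ≤ a i ∧ a i ≤ 2) → x + a ∈ Ω \ bdry Ω)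

open scoped Classical in
/-- The parity class `Ω_h^{∘j}` of the interior sub-grid. -/
noncomputable def circJ (Ω : Finset Pt) (p : Fin 3 → ZMod 2) : Finset Pt :=
  (circInt Ω).filter (fun x => parity x = p)

/-- Energy identity for the homogeneous implicit equation (key step in the proof
of Theorem 2.6): `‖ũⁿ⁺¹‖²_{Ω_h} + τ ∑_j ‖D_j⁺ũⁿ⁺¹‖²_{Ω_h} = 0`, hence `ũⁿ⁺¹ ≡ 0`. -/
private lemma sum_shift (T : Finset Pt) (e : Pt) (f : Pt → ℝ)
    (h1 : ∀ x ∉ T, f (x + e) = 0) (h2 : ∀ x ∉ T, f x = 0) :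
    ∑ x ∈ T, f (x + e) = ∑ x ∈ T, f x := by
  classical
  have himg : ∑ x ∈ T, f (x + e) = ∑ y ∈ T.image (fun x => x + e), f y := by
    rw [Finset.sum_image]
    intro a _ b _ hab
    simpa using congrArg (fun z => z - e) hab
  rw [himg]
  have h1' : ∑ y ∈ T.image (fun x => x + e), f y
      = ∑ y ∈ T ∪ T.image (fun x => x + e), f y := by
    apply Finset.sum_subset Finset.subset_union_right
    intro y _ hy2
    have hne : y - e ∉ T := fun hc => hy2 (Finset.mem_image.mpr ⟨y - e, hc, by abel⟩)
    simpa using h1 _ hne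
  have h2' : ∑ y ∈ T, f y = ∑ y ∈ T ∪ T.image (fun x => x + e), f y :=
    Finset.sum_subset Finset.subset_union_left (fun y _ hy2 => h2 y hy2)
  rw [h1', h2']

private lemma sum_shift' (T : Finset Pt) (e : Pt) (f : Pt → ℝ)
    (h1 : ∀ x ∉ T, f (x - e) = 0) (h2 : ∀ x ∉ T, f x = 0) :
    ∑ x ∈ T, f (x - e) = ∑ x ∈ T, f x := by
  have := sum_shift T (-e) f (by simpa [sub_eq_add_neg] using h1) h2
  simpa [sub_eq_add_neg] using this

theorem homogeneous_implicit_energy (h τ : ℝ) (hh : 0 < h) (hτ : 0 < τ)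
    (Ω : Finset Pt) (un ut : Pt → Fin 3 → ℝ)
    (hun0 : ∀ x ∉ Ω, un x = 0)
    (hdiv : ∀ x ∈ Ω \ bdry Ω, divc h un x = 0)
    (hunb : ∀ x ∈ bdry Ω, un x = 0)
    (hut0 : ∀ x ∉ Ω, ut x = 0) (hutb : ∀ x ∈ bdry Ω, ut x = 0)
    (heq : ∀ x ∈ Ω \ bdry Ω, ∀ i : Fin 3,
      ut x i =
        -(τ / 2) * (∑ j, (un (x - ee j) j * Dc h j (fun y => ut y i) (x - ee j)
            + un (x + ee j) j * Dc h j (fun y => ut y i) (x + ee j)))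
        + τ * (∑ j, D2 h j (fun y => ut y i) x)) :
    (∑ x ∈ Ω, (∑ i, (ut x i) ^ 2) * h ^ 3)
      + τ * ∑ j, ∑ x ∈ Ω, (∑ i, (Dp h j (fun y => ut y i) x) ^ 2) * h ^ 3 = 0
    ∧ ∀ x, ut x = 0 := by
  classical
  set T : Finset Pt := Ω ∪ (Finset.univ : Finset (Fin 3)).biUnion
      (fun j => Ω.image (fun x => x + ee j) ∪ Ω.image (fun x => x - ee j)) with hTdef
  have hΩT : Ω ⊆ T := Finset.subset_union_left
  have hTp : ∀ (j : Fin 3) (x : Pt), x + ee j ∈ Ω → x ∈ T := by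
    intro j x hx
    refine Finset.mem_union_right _ (Finset.mem_biUnion.mpr ⟨j, Finset.mem_univ j, ?_⟩)
    exact Finset.mem_union_right _ (Finset.mem_image.mpr ⟨x + ee j, hx, by abel⟩)
  have hTm : ∀ (j : Fin 3) (x : Pt), x - ee j ∈ Ω → x ∈ T := by
    intro j x hx
    refine Finset.mem_union_right _ (Finset.mem_biUnion.mpr ⟨j, Finset.mem_univ j, ?_⟩)
    exact Finset.mem_union_left _ (Finset.mem_image.mpr ⟨x - ee j, hx, by abel⟩)
  have hv0 : ∀ (i : Fin 3) (x : Pt), x ∉ Ω \ bdry Ω → ut x i = 0 := by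
    intro i x hx
    by_cases hΩ : x ∈ Ω
    · have hb : x ∈ bdry Ω := by
        by_contra hb
        exact hx (Finset.mem_sdiff.mpr ⟨hΩ, hb⟩)
      exact congrFun (hutb x hb) i
    · exact congrFun (hut0 x hΩ) i
  have ha0 : ∀ (j : Fin 3) (x : Pt), x ∉ Ω \ bdry Ω → un x j = 0 := by
    intro j x hx
    by_cases hΩ : x ∈ Ω
    · have hb : x ∈ bdry Ω := by
        by_contra hb
        exact hx (Finset.mem_sdiff.mpr ⟨hΩ, hb⟩)
      exact congrFun (hunb x hb) j
    · exact congrFun (hun0 x hΩ) j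
  have key : ∀ (i : Fin 3) (x : Pt), ut x i = 0 := by
    intro i
    -- advection: summation by parts
    have adv : ∀ j : Fin 3,
        ∑ x ∈ T, ut x i * (un (x - ee j) j * Dc h j (fun y => ut y i) (x - ee j)
          + un (x + ee j) j * Dc h j (fun y => ut y i) (x + ee j))
        = -∑ x ∈ T, Dc h j (fun y => un y j) x * ut x i ^ 2 := by
      intro j
      have A1 : ∑ x ∈ T, ut x i * (un (x - ee j) j * Dc h j (fun y => ut y i) (x - ee j))
          = ∑ x ∈ T, ut (x + ee j) i * (un x j * Dc h j (fun y => ut y i) x) := by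
        have H := sum_shift' T (ee j)
          (fun x => ut (x + ee j) i * (un x j * Dc h j (fun y => ut y i) x))
          (fun x hx => by
            have hz : un (x - ee j) j = 0 :=
              ha0 j _ (fun hc => hx (hTm j x (Finset.mem_sdiff.mp hc).1))
            simp only [hz]; ring)
          (fun x hx => by
            have hz : un x j = 0 := ha0 j x (fun hc => hx (hΩT (Finset.mem_sdiff.mp hc).1))
            simp only [hz]; ring)
        rw [← H]
        exact Finset.sum_congr rfl fun x _ => by simp only [sub_add_cancel]
      have A2 : ∑ x ∈ T, ut x i * (un (x + ee j) j * Dc h j (fun y => ut y i) (x + ee j))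
          = ∑ x ∈ T, ut (x - ee j) i * (un x j * Dc h j (fun y => ut y i) x) := by
        have H := sum_shift T (ee j)
          (fun x => ut (x - ee j) i * (un x j * Dc h j (fun y => ut y i) x))
          (fun x hx => by
            have hz : un (x + ee j) j = 0 :=
              ha0 j _ (fun hc => hx (hTp j x (Finset.mem_sdiff.mp hc).1))
            simp only [hz]; ring)
          (fun x hx => by
            have hz : un x j = 0 := ha0 j x (fun hc => hx (hΩT (Finset.mem_sdiff.mp hc).1))
            simp only [hz]; ring)
        rw [← H]
        exact Finset.sum_congr rfl fun x _ => by simp only [add_sub_cancel_right]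
      have A4 : ∑ x ∈ T, un x j * ut (x + ee j) i ^ 2 / (2 * h)
          = ∑ x ∈ T, un (x - ee j) j * ut x i ^ 2 / (2 * h) := by
        have H := sum_shift T (ee j)
          (fun x => un (x - ee j) j * ut x i ^ 2 / (2 * h))
          (fun x hx => by
            have hz : ut (x + ee j) i = 0 :=
              hv0 i _ (fun hc => hx (hTp j x (Finset.mem_sdiff.mp hc).1))
            simp only [hz]; ring)
          (fun x hx => by
            have hz : ut x i = 0 := hv0 i x (fun hc => hx (hΩT (Finset.mem_sdiff.mp hc).1))
            simp only [hz]; ring)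
        rw [← H]
        exact Finset.sum_congr rfl fun x _ => by simp only [add_sub_cancel_right]
      have A5 : ∑ x ∈ T, un x j * ut (x - ee j) i ^ 2 / (2 * h)
          = ∑ x ∈ T, un (x + ee j) j * ut x i ^ 2 / (2 * h) := by
        have H := sum_shift' T (ee j)
          (fun x => un (x + ee j) j * ut x i ^ 2 / (2 * h))
          (fun x hx => by
            have hz : ut (x - ee j) i = 0 :=
              hv0 i _ (fun hc => hx (hTm j x (Finset.mem_sdiff.mp hc).1))
            simp only [hz]; ring)
          (fun x hx => by
            have hz : ut x i = 0 := hv0 i x (fun hc => hx (hΩT (Finset.mem_sdiff.mp hc).1))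
            simp only [hz]; ring)
        rw [← H]
        exact Finset.sum_congr rfl fun x _ => by simp only [sub_add_cancel]
      calc ∑ x ∈ T, ut x i * (un (x - ee j) j * Dc h j (fun y => ut y i) (x - ee j)
              + un (x + ee j) j * Dc h j (fun y => ut y i) (x + ee j))
          = ∑ x ∈ T, ut x i * (un (x - ee j) j * Dc h j (fun y => ut y i) (x - ee j))
            + ∑ x ∈ T, ut x i * (un (x + ee j) j * Dc h j (fun y => ut y i) (x + ee j)) := by
            rw [← Finset.sum_add_distrib]
            exact Finset.sum_congr rfl fun x _ => by ring
        _ = ∑ x ∈ T, ut (x + ee j) i * (un x j * Dc h j (fun y => ut y i) x)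
            + ∑ x ∈ T, ut (x - ee j) i * (un x j * Dc h j (fun y => ut y i) x) := by
            rw [A1, A2]
        _ = ∑ x ∈ T, (un x j * ut (x + ee j) i ^ 2 / (2 * h)
              - un x j * ut (x - ee j) i ^ 2 / (2 * h)) := by
            rw [← Finset.sum_add_distrib]
            refine Finset.sum_congr rfl fun x _ => ?_
            simp only [Dc]; ring
        _ = ∑ x ∈ T, un x j * ut (x + ee j) i ^ 2 / (2 * h)
            - ∑ x ∈ T, un x j * ut (x - ee j) i ^ 2 / (2 * h) := Finset.sum_sub_distrib _ _
        _ = ∑ x ∈ T, un (x - ee j) j * ut x i ^ 2 / (2 * h)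
            - ∑ x ∈ T, un (x + ee j) j * ut x i ^ 2 / (2 * h) := by rw [A4, A5]
        _ = ∑ x ∈ T, (un (x - ee j) j * ut x i ^ 2 / (2 * h)
              - un (x + ee j) j * ut x i ^ 2 / (2 * h)) := (Finset.sum_sub_distrib _ _).symm
        _ = -∑ x ∈ T, Dc h j (fun y => un y j) x * ut x i ^ 2 := by
            rw [← Finset.sum_neg_distrib]
            refine Finset.sum_congr rfl fun x _ => ?_
            simp only [Dc]; ring
    have divzero : ∑ j : Fin 3, ∑ x ∈ T, Dc h j (fun y => un y j) x * ut x i ^ 2 = 0 := by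
      rw [Finset.sum_comm]
      apply Finset.sum_eq_zero
      intro x _
      by_cases hx : x ∈ Ω \ bdry Ω
      · have hd := hdiv x hx
        rw [← Finset.sum_mul]
        have hdd : (∑ j : Fin 3, Dc h j (fun y => un y j) x) = divc h un x := rfl
        rw [hdd, hd, zero_mul]
      · simp [hv0 i x hx]
    -- diffusion: summation by parts
    have dif : ∀ j : Fin 3, ∑ x ∈ T, ut x i * D2 h j (fun y => ut y i) x
        = -∑ x ∈ T, Dp h j (fun y => ut y i) x ^ 2 := by
      intro j
      have P : ∑ x ∈ T, ut x i * ut (x - ee j) i = ∑ x ∈ T, ut (x + ee j) i * ut x i := by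
        have H := sum_shift' T (ee j) (fun x => ut (x + ee j) i * ut x i)
          (fun x hx => by
            have hz : ut (x - ee j) i = 0 :=
              hv0 i _ (fun hc => hx (hTm j x (Finset.mem_sdiff.mp hc).1))
            simp only [hz]; ring)
          (fun x hx => by
            have hz : ut x i = 0 := hv0 i x (fun hc => hx (hΩT (Finset.mem_sdiff.mp hc).1))
            simp only [hz]; ring)
        rw [← H]
        exact Finset.sum_congr rfl fun x _ => by simp only [sub_add_cancel]
      have Q : ∑ x ∈ T, ut (x + ee j) i ^ 2 = ∑ x ∈ T, ut x i ^ 2 := by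
        apply sum_shift T (ee j) (fun x => ut x i ^ 2)
        · intro x hx
          have hz : ut (x + ee j) i = 0 :=
            hv0 i _ (fun hc => hx (hTp j x (Finset.mem_sdiff.mp hc).1))
          simp only [hz]; ring
        · intro x hx
          have hz : ut x i = 0 := hv0 i x (fun hc => hx (hΩT (Finset.mem_sdiff.mp hc).1))
          simp only [hz]; ring
      have e1 : ∑ x ∈ T, ut x i * D2 h j (fun y => ut y i) x
          = ((∑ x ∈ T, ut (x + ee j) i * ut x i) + (∑ x ∈ T, ut x i * ut (x - ee j) i)
              - 2 * ∑ x ∈ T, ut x i ^ 2) / h ^ 2 := by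
        rw [Finset.mul_sum, ← Finset.sum_add_distrib, ← Finset.sum_sub_distrib,
          Finset.sum_div]
        refine Finset.sum_congr rfl fun x _ => ?_
        simp only [D2]; ring
      have e2 : ∑ x ∈ T, Dp h j (fun y => ut y i) x ^ 2
          = ((∑ x ∈ T, ut (x + ee j) i ^ 2) + (∑ x ∈ T, ut x i ^ 2)
              - 2 * ∑ x ∈ T, ut (x + ee j) i * ut x i) / h ^ 2 := by
        rw [Finset.mul_sum, ← Finset.sum_add_distrib, ← Finset.sum_sub_distrib,
          Finset.sum_div]
        refine Finset.sum_congr rfl fun x _ => ?_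
        simp only [Dp]
        rw [div_pow]
        ring
      rw [e1, e2, P, Q]
      ring
    -- the energy identity for component i
    have step1 : ∑ x ∈ T, ut x i ^ 2
        = ∑ x ∈ T, ut x i *
            (-(τ / 2) * (∑ j, (un (x - ee j) j * Dc h j (fun y => ut y i) (x - ee j)
                + un (x + ee j) j * Dc h j (fun y => ut y i) (x + ee j)))
              + τ * (∑ j, D2 h j (fun y => ut y i) x)) := by
      refine Finset.sum_congr rfl fun x _ => ?_
      by_cases hx : x ∈ Ω \ bdry Ω
      · rw [sq]
        exact congrArg (fun z => ut x i * z) (heq x hx i)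
      · simp [hv0 i x hx]
    have SA : ∑ x ∈ T, ut x i * (∑ j, (un (x - ee j) j * Dc h j (fun y => ut y i) (x - ee j)
          + un (x + ee j) j * Dc h j (fun y => ut y i) (x + ee j))) = 0 := by
      calc ∑ x ∈ T, ut x i * (∑ j, (un (x - ee j) j * Dc h j (fun y => ut y i) (x - ee j)
              + un (x + ee j) j * Dc h j (fun y => ut y i) (x + ee j)))
          = ∑ x ∈ T, ∑ j, ut x i * (un (x - ee j) j * Dc h j (fun y => ut y i) (x - ee j)
              + un (x + ee j) j * Dc h j (fun y => ut y i) (x + ee j)) := by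
            exact Finset.sum_congr rfl fun x _ => Finset.mul_sum _ _ _
        _ = ∑ j, ∑ x ∈ T, ut x i * (un (x - ee j) j * Dc h j (fun y => ut y i) (x - ee j)
              + un (x + ee j) j * Dc h j (fun y => ut y i) (x + ee j)) := Finset.sum_comm
        _ = ∑ j : Fin 3, -∑ x ∈ T, Dc h j (fun y => un y j) x * ut x i ^ 2 :=
            Finset.sum_congr rfl fun j _ => adv j
        _ = -∑ j : Fin 3, ∑ x ∈ T, Dc h j (fun y => un y j) x * ut x i ^ 2 :=
            Finset.sum_neg_distrib _
        _ = 0 := by rw [divzero, neg_zero]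
    have SD : ∑ x ∈ T, ut x i * (∑ j, D2 h j (fun y => ut y i) x)
        = -∑ j : Fin 3, ∑ x ∈ T, Dp h j (fun y => ut y i) x ^ 2 := by
      calc ∑ x ∈ T, ut x i * (∑ j, D2 h j (fun y => ut y i) x)
          = ∑ x ∈ T, ∑ j, ut x i * D2 h j (fun y => ut y i) x :=
            Finset.sum_congr rfl fun x _ => Finset.mul_sum _ _ _
        _ = ∑ j, ∑ x ∈ T, ut x i * D2 h j (fun y => ut y i) x := Finset.sum_comm
        _ = ∑ j : Fin 3, -∑ x ∈ T, Dp h j (fun y => ut y i) x ^ 2 :=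
            Finset.sum_congr rfl fun j _ => dif j
        _ = -∑ j : Fin 3, ∑ x ∈ T, Dp h j (fun y => ut y i) x ^ 2 := Finset.sum_neg_distrib _
    have step2 : ∀ (A B : Pt → ℝ), ∑ x ∈ T, ut x i * (-(τ / 2) * A x + τ * B x)
        = -(τ / 2) * ∑ x ∈ T, ut x i * A x + τ * ∑ x ∈ T, ut x i * B x := by
      intro A B
      rw [Finset.mul_sum, Finset.mul_sum, ← Finset.sum_add_distrib]
      exact Finset.sum_congr rfl fun x _ => by ring
    have main : ∑ x ∈ T, ut x i ^ 2
        = -(τ * ∑ j : Fin 3, ∑ x ∈ T, Dp h j (fun y => ut y i) x ^ 2) := by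
      rw [step1]
      rw [step2 (fun x => ∑ j, (un (x - ee j) j * Dc h j (fun y => ut y i) (x - ee j)
            + un (x + ee j) j * Dc h j (fun y => ut y i) (x + ee j)))
          (fun x => ∑ j, D2 h j (fun y => ut y i) x)]
      rw [SA, SD]
      ring
    have hD : 0 ≤ ∑ j : Fin 3, ∑ x ∈ T, Dp h j (fun y => ut y i) x ^ 2 :=
      Finset.sum_nonneg fun j _ => Finset.sum_nonneg fun x _ => sq_nonneg _
    have hS0 : ∑ x ∈ T, ut x i ^ 2 = 0 := by
      have hle : ∑ x ∈ T, ut x i ^ 2 ≤ 0 := by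
        rw [main]; nlinarith
      have hge : 0 ≤ ∑ x ∈ T, ut x i ^ 2 := Finset.sum_nonneg fun x _ => sq_nonneg _
      linarith
    intro x
    by_cases hxT : x ∈ T
    · have := (Finset.sum_eq_zero_iff_of_nonneg (fun x _ => sq_nonneg (ut x i))).mp hS0 x hxT
      exact pow_eq_zero_iff (two_ne_zero) |>.mp this
    · exact congrFun (hut0 x (fun hc => hxT (hΩT hc))) i
  refine ⟨?_, fun x => funext fun i => key i x⟩
  simp [Dp, key]
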